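/- arXiv:1803.09229 — 2 statements merged into one kernel-verified Lean document; each statement's English description precedes it below -/
import Mathlib

section
/- Let a, b be natural numbers with a ≥ 2 and b ≥ 2, and let A = [[1, a, 0], [0, 1, a], [0, 0, 1]] and B = [[1, 0, 0], [b, 1, 0], [0, b, 1]] in SL₃(ℤ). Then for every integer l ≥ 4, the matrices A^l and B^l generate a free subgroup of rank 2 of SL₃(ℤ); that is, the group homomorphism from the free group on two generators to SL₃(ℤ) sending the two generators to A^l and B^l respectively is injective. -/
/-! Generic two-set ping-pong lemma for free groups, adapted from Mathlib's
`FreeGroup.injective_lift_of_ping_pong`. -/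
open Cardinal Pointwise in
theorem myPingPong {ι : Type*} [Nontrivial ι] {G : Type*} [Group G] (a : ι → G)
    {α : Type*} [MulAction G α] (X : ι → Set α)
    (hnonempty : ∀ i, (X i).Nonempty)
    (hdisj : Pairwise (Function.onFun Disjoint X))
    (hmove : ∀ i j, i ≠ j → ∀ n : ℤ, n ≠ 0 → a i ^ n • X j ⊆ X i) :
    Function.Injective (FreeGroup.lift a) := by
  have h : FreeGroup.lift a =
      (Monoid.CoprodI.lift fun i => FreeGroup.lift fun _ : Unit => a i).comp
        (@freeGroupEquivCoprodI ι).toMonoidHom := by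
    ext i
    simp
  rw [h, MonoidHom.coe_comp]
  refine Function.Injective.comp ?_ (MulEquiv.injective freeGroupEquivCoprodI)
  let H : ι → Type _ := fun _i => FreeGroup Unit
  let f : ∀ i, H i →* G := fun i => FreeGroup.lift fun _ => a i
  apply Monoid.CoprodI.lift_injective_of_ping_pong f _ X
  · exact hnonempty
  · exact hdisj
  · show Pairwise fun i j => ∀ h : H i, h ≠ 1 → f i h • X j ⊆ X i
    rintro i j hij
    refine FreeGroup.freeGroupUnitEquivInt.forall_congr_left.mpr ?_
    intro n hne1
    change FreeGroup.lift (fun _ => a i) (FreeGroup.of () ^ n) • X j ⊆ X i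
    simp only [map_zpow, FreeGroup.lift_apply_of]
    have hnne0 : n ≠ 0 := by
      rintro rfl
      apply hne1
      simp [H, FreeGroup.freeGroupUnitEquivInt]
    exact hmove i j hij n hnne0
  show _ ∨ ∃ i, 3 ≤ #(H i)
  inhabit ι
  right
  use Inhabited.default
  simp only [H]
  rw [FreeGroup.freeGroupUnitEquivInt.cardinal_eq, Cardinal.mk_denumerable]
  exact le_of_lt (nat_lt_aleph0 3)

abbrev SL3' := Matrix.SpecialLinearGroup (Fin 3) ℤ

/-- `A = [[1, a, 0], [0, 1, a], [0, 0, 1]]` as an element of `SL₃(ℤ)`. -/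
def A3 (a : ℕ) : Matrix.SpecialLinearGroup (Fin 3) ℤ :=
  ⟨!![1, (a : ℤ), 0; 0, 1, (a : ℤ); 0, 0, 1], by
    simp [Matrix.det_fin_three, Matrix.vecHead, Matrix.vecTail]⟩

/-- `B = [[1, 0, 0], [b, 1, 0], [0, b, 1]]` as an element of `SL₃(ℤ)`. -/
def B3 (b : ℕ) : Matrix.SpecialLinearGroup (Fin 3) ℤ :=
  ⟨!![1, 0, 0; (b : ℤ), 1, 0; 0, (b : ℤ), 1], by
    simp [Matrix.det_fin_three, Matrix.vecHead, Matrix.vecTail]⟩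

def Usl (s t : ℤ) : SL3' :=
  ⟨!![1, s, t; 0, 1, s; 0, 0, 1], by
    simp [Matrix.det_fin_three, Matrix.vecHead, Matrix.vecTail]⟩

def Lsl (s t : ℤ) : SL3' :=
  ⟨!![1, 0, 0; s, 1, 0; t, s, 1], by
    simp [Matrix.det_fin_three, Matrix.vecHead, Matrix.vecTail]⟩

lemma Usl_mul (s t s' t' : ℤ) : Usl s t * Usl s' t' = Usl (s + s') (t + t' + s * s') := by
  apply Subtype.ext
  show (Usl s t).1 * (Usl s' t').1 = _
  ext i j
  fin_cases i <;> fin_cases j <;>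
    simp [Usl, Matrix.mul_apply, Fin.sum_univ_three, Matrix.vecHead, Matrix.vecTail] <;> ring

lemma Lsl_mul (s t s' t' : ℤ) : Lsl s t * Lsl s' t' = Lsl (s + s') (t + t' + s * s') := by
  apply Subtype.ext
  show (Lsl s t).1 * (Lsl s' t').1 = _
  ext i j
  fin_cases i <;> fin_cases j <;>
    simp [Lsl, Matrix.mul_apply, Fin.sum_univ_three, Matrix.vecHead, Matrix.vecTail] <;> ring

lemma Usl_zero : Usl 0 0 = 1 := by
  apply Subtype.ext
  show (Usl 0 0).1 = (1 : Matrix (Fin 3) (Fin 3) ℤ)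
  ext i j
  fin_cases i <;> fin_cases j <;>
    simp [Usl, Matrix.one_apply, Matrix.vecHead, Matrix.vecTail]

lemma Lsl_zero : Lsl 0 0 = 1 := by
  apply Subtype.ext
  show (Lsl 0 0).1 = (1 : Matrix (Fin 3) (Fin 3) ℤ)
  ext i j
  fin_cases i <;> fin_cases j <;>
    simp [Lsl, Matrix.one_apply, Matrix.vecHead, Matrix.vecTail]

lemma Usl_inv (s t : ℤ) : (Usl s t)⁻¹ = Usl (-s) (s * s - t) := by
  symm
  apply eq_inv_of_mul_eq_one_right
  rw [Usl_mul, show s + -s = 0 by ring, show t + (s*s - t) + s * (-s) = 0 by ring, Usl_zero]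

lemma Lsl_inv (s t : ℤ) : (Lsl s t)⁻¹ = Lsl (-s) (s * s - t) := by
  symm
  apply eq_inv_of_mul_eq_one_right
  rw [Lsl_mul, show s + -s = 0 by ring, show t + (s*s - t) + s * (-s) = 0 by ring, Lsl_zero]

lemma Usl_pow (s : ℤ) (k : ℕ) :
    ∃ t : ℤ, (Usl s 0) ^ k = Usl (k * s) t ∧ 2 * t = k * (k - 1) * s ^ 2 := by
  induction k with
  | zero => exact ⟨0, by simpa using Usl_zero.symm, by ring⟩
  | succ k ih =>
    obtain ⟨t, ht, h2⟩ := ih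
    refine ⟨t + (k * s) * s, ?_, ?_⟩
    · rw [pow_succ, ht, Usl_mul]
      congr 1 <;> push_cast <;> ring
    · push_cast at h2 ⊢
      linarith [h2, sq_nonneg s]

lemma Lsl_pow (s : ℤ) (k : ℕ) :
    ∃ t : ℤ, (Lsl s 0) ^ k = Lsl (k * s) t ∧ 2 * t = k * (k - 1) * s ^ 2 := by
  induction k with
  | zero => exact ⟨0, by simpa using Lsl_zero.symm, by ring⟩
  | succ k ih =>
    obtain ⟨t, ht, h2⟩ := ih
    refine ⟨t + (k * s) * s, ?_, ?_⟩
    · rw [pow_succ, ht, Lsl_mul]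
      congr 1 <;> push_cast <;> ring
    · push_cast at h2 ⊢
      linarith [h2, sq_nonneg s]

/-- bounds for natural powers with good exponent -/
lemma pow_bounds (a k : ℕ) (ha : 2 ≤ a) (hk : 4 ≤ k) {t : ℤ}
    (h2 : 2 * t = (k : ℤ) * ((k : ℤ) - 1) * (a : ℤ) ^ 2) :
    8 ≤ (k : ℤ) * a ∧ 3 * ((k : ℤ) * a) ≤ t ∧ 3 * ((k : ℤ) * a) ≤ (k : ℤ) * a * ((k : ℤ) * a) - t := by
  have hk' : (4 : ℤ) ≤ (k : ℤ) := by exact_mod_cast hk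
  have ha' : (2 : ℤ) ≤ (a : ℤ) := by exact_mod_cast ha
  have e0 : (6 : ℤ) ≤ ((k : ℤ) - 1) * a := by nlinarith
  have e0' : (6 : ℤ) ≤ ((k : ℤ) + 1) * a := by nlinarith
  have e1 : 0 ≤ (k : ℤ) * a * (((k : ℤ) - 1) * a - 6) :=
    mul_nonneg (by positivity) (by linarith)
  have e2 : 0 ≤ (k : ℤ) * a * (((k : ℤ) + 1) * a - 6) :=
    mul_nonneg (by positivity) (by linarith)
  refine ⟨by nlinarith, by nlinarith, by nlinarith⟩

lemma rep_pow_A (a l : ℕ) (ha : 2 ≤ a) (hl : 4 ≤ l) (n : ℤ) (hn : n ≠ 0) :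
    ∃ s t : ℤ, ((A3 a) ^ l) ^ n = Usl s t ∧ 8 ≤ |s| ∧ 3 * |s| ≤ |t| := by
  have hA : A3 a = Usl (a : ℤ) 0 := Subtype.ext rfl
  set m : ℕ := n.natAbs with hm
  have hm0 : 4 ≤ l * m := by
    have : 1 ≤ m := Nat.one_le_iff_ne_zero.mpr (Int.natAbs_ne_zero.mpr hn)
    calc 4 ≤ l * 1 := by omega
    _ ≤ l * m := Nat.mul_le_mul_left _ this
  obtain ⟨t, ht, h2⟩ := Usl_pow (a : ℤ) (l * m)
  have hlm : ((l * m : ℕ) : ℤ) * (a : ℤ) = ((l * m : ℕ) : ℤ) * a := rfl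
  obtain ⟨hb1, hb2, hb3⟩ := pow_bounds a (l * m) ha hm0 h2
  have hpos : (0 : ℤ) ≤ ((l * m : ℕ) : ℤ) * a := by positivity
  have hUm : ((A3 a) ^ l) ^ m = Usl (((l * m : ℕ) : ℤ) * a) t := by
    rw [hA, ← pow_mul]; exact ht
  rcases Int.natAbs_eq n with hcase | hcase
  · refine ⟨((l * m : ℕ) : ℤ) * a, t, ?_, ?_, ?_⟩
    · rw [hcase, zpow_natCast, ← hm, hUm]
    · rwa [abs_of_nonneg hpos]
    · rw [abs_of_nonneg hpos, abs_of_nonneg (by linarith)]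
      exact hb2
  · refine ⟨-(((l * m : ℕ) : ℤ) * a), ((l * m : ℕ) : ℤ) * a * (((l * m : ℕ) : ℤ) * a) - t, ?_, ?_, ?_⟩
    · rw [hcase, zpow_neg, zpow_natCast, ← hm, hUm, Usl_inv]
    · rwa [abs_neg, abs_of_nonneg hpos]
    · rw [abs_neg, abs_of_nonneg hpos, abs_of_nonneg (by linarith)]
      exact hb3

lemma rep_pow_B (b l : ℕ) (hb : 2 ≤ b) (hl : 4 ≤ l) (n : ℤ) (hn : n ≠ 0) :
    ∃ s t : ℤ, ((B3 b) ^ l) ^ n = Lsl s t ∧ 8 ≤ |s| ∧ 3 * |s| ≤ |t| := by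
  have hB : B3 b = Lsl (b : ℤ) 0 := Subtype.ext rfl
  set m : ℕ := n.natAbs with hm
  have hm0 : 4 ≤ l * m := by
    have : 1 ≤ m := Nat.one_le_iff_ne_zero.mpr (Int.natAbs_ne_zero.mpr hn)
    calc 4 ≤ l * 1 := by omega
    _ ≤ l * m := Nat.mul_le_mul_left _ this
  obtain ⟨t, ht, h2⟩ := Lsl_pow (b : ℤ) (l * m)
  obtain ⟨hb1, hb2, hb3⟩ := pow_bounds b (l * m) hb hm0 h2
  have hpos : (0 : ℤ) ≤ ((l * m : ℕ) : ℤ) * b := by positivity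
  have hUm : ((B3 b) ^ l) ^ m = Lsl (((l * m : ℕ) : ℤ) * b) t := by
    rw [hB, ← pow_mul]; exact ht
  rcases Int.natAbs_eq n with hcase | hcase
  · refine ⟨((l * m : ℕ) : ℤ) * b, t, ?_, ?_, ?_⟩
    · rw [hcase, zpow_natCast, ← hm, hUm]
    · rwa [abs_of_nonneg hpos]
    · rw [abs_of_nonneg hpos, abs_of_nonneg (by linarith)]
      exact hb2
  · refine ⟨-(((l * m : ℕ) : ℤ) * b), ((l * m : ℕ) : ℤ) * b * (((l * m : ℕ) : ℤ) * b) - t, ?_, ?_, ?_⟩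
    · rw [hcase, zpow_neg, zpow_natCast, ← hm, hUm, Lsl_inv]
    · rwa [abs_neg, abs_of_nonneg hpos]
    · rw [abs_neg, abs_of_nonneg hpos, abs_of_nonneg (by linarith)]
      exact hb3

/-- The action of `SL₃(ℤ)` on nonzero integer vectors. -/
def V3 := {v : Fin 3 → ℤ // v ≠ 0}

instance : MulAction SL3' V3 where
  smul g v := ⟨g.1.mulVec v.1, by
    intro h0
    apply v.2
    have h1 : (g⁻¹.1 * g.1).mulVec v.1 = g⁻¹.1.mulVec (g.1.mulVec v.1) :=
      (Matrix.mulVec_mulVec _ _ _).symm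
    have h2 : g⁻¹.1 * g.1 = 1 := by
      rw [← Matrix.SpecialLinearGroup.coe_mul, inv_mul_cancel,
        Matrix.SpecialLinearGroup.coe_one]
    rw [h2, Matrix.one_mulVec, h0, Matrix.mulVec_zero] at h1
    exact h1⟩
  one_smul v := Subtype.ext (by
    show (1 : SL3').1.mulVec v.1 = v.1
    rw [Matrix.SpecialLinearGroup.coe_one, Matrix.one_mulVec])
  mul_smul g h v := Subtype.ext (by
    show (g * h).1.mulVec v.1 = g.1.mulVec (h.1.mulVec v.1)
    rw [Matrix.SpecialLinearGroup.coe_mul, ← Matrix.mulVec_mulVec])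

lemma smul_coe (g : SL3') (v : V3) : (g • v).1 = g.1.mulVec v.1 := rfl

lemma Usl_mulVec (s t : ℤ) (u : Fin 3 → ℤ) :
    (Usl s t).1.mulVec u = ![u 0 + s * u 1 + t * u 2, u 1 + s * u 2, u 2] := by
  funext i
  fin_cases i <;>
    simp [Usl, Matrix.mulVec, dotProduct, Fin.sum_univ_three, Matrix.vecHead,
      Matrix.vecTail]

lemma Lsl_mulVec (s t : ℤ) (u : Fin 3 → ℤ) :
    (Lsl s t).1.mulVec u = ![u 0, s * u 0 + u 1, t * u 0 + s * u 1 + u 2] := by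
  funext i
  fin_cases i <;>
    simp [Lsl, Matrix.mulVec, dotProduct, Fin.sum_univ_three, Matrix.vecHead,
      Matrix.vecTail] <;> ring

/-- the core ping-pong inequality -/
lemma core_ineq (s t x y z : ℤ) (hs : 8 ≤ |s|) (ht : 3 * |s| ≤ |t|)
    (hv : |x| + |y| < |z|) :
    |y + s * z| + |z| < |x + s * y + t * z| := by
  have h1 : |t * z| - |x + s * y| ≤ |x + s * y + t * z| := by
    have h := abs_sub_abs_le_abs_sub (t * z) (-(x + s * y))
    simp only [abs_neg, sub_neg_eq_add] at h
    rw [add_comm (t*z)] at h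
    linarith
  have h2 : |x + s * y| ≤ |x| + |s| * |y| := by
    calc |x + s * y| ≤ |x| + |s * y| := abs_add_le _ _
    _ = |x| + |s| * |y| := by rw [abs_mul]
  have h3 : |y + s * z| ≤ |y| + |s| * |z| := by
    calc |y + s * z| ≤ |y| + |s * z| := abs_add_le _ _
    _ = |y| + |s| * |z| := by rw [abs_mul]
  have h4 : |t * z| = |t| * |z| := abs_mul _ _
  have hx := abs_nonneg x
  have hy := abs_nonneg y
  have hz := abs_nonneg z
  nlinarith [mul_le_mul_of_nonneg_right ht hz,
    mul_le_mul_of_nonneg_left hv (by linarith : (0:ℤ) ≤ 2 * |s| - 1),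
    mul_nonneg (by linarith : (0:ℤ) ≤ |s| - 2) hy,
    mul_nonneg (by linarith : (0:ℤ) ≤ 2*|s| - 2) hx]

open Pointwise in
/-- for natural numbers `a, b ≥ 2` and every `l ≥ 4`, the matrices `A^l` and
`B^l` generate a free subgroup of rank 2 of `SL₃(ℤ)`. -/
theorem sl3_free_powers (a b : ℕ) (ha : 2 ≤ a) (hb : 2 ≤ b) (l : ℕ) (hl : 4 ≤ l) :
    Function.Injective ⇑(FreeGroup.lift ![(A3 a) ^ l, (B3 b) ^ l]) := by
  apply myPingPong (X := ![{v : V3 | |v.1 1| + |v.1 2| < |v.1 0|},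
    {v : V3 | |v.1 0| + |v.1 1| < |v.1 2|}])
  · -- nonempty
    intro i
    fin_cases i
    · refine ⟨⟨![1, 0, 0], fun h => by simpa using congrFun h 0⟩, ?_⟩
      show |(0:ℤ)| + |(0:ℤ)| < |(1:ℤ)|
      simp
    · refine ⟨⟨![0, 0, 1], fun h => by simpa using congrFun h 2⟩, ?_⟩
      show |(0:ℤ)| + |(0:ℤ)| < |(1:ℤ)|
      simp
  · -- disjoint
    intro i j hij
    have key : ∀ v : V3, v ∈ ({v : V3 | |v.1 1| + |v.1 2| < |v.1 0|}) →
        v ∈ ({v : V3 | |v.1 0| + |v.1 1| < |v.1 2|}) → False := by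
      rintro v h0 h1
      simp only [Set.mem_setOf_eq] at h0 h1
      have := abs_nonneg (v.1 0)
      have := abs_nonneg (v.1 1)
      have := abs_nonneg (v.1 2)
      omega
    fin_cases i <;> fin_cases j
    · exact absurd rfl hij
    · simp only [Function.onFun, Matrix.cons_val_zero, Matrix.cons_val_one, Matrix.head_cons]
      rw [Set.disjoint_left]
      exact fun {v} h0 h1 => key v h0 h1
    · simp only [Function.onFun, Matrix.cons_val_zero, Matrix.cons_val_one, Matrix.head_cons]
      rw [Set.disjoint_left]
      exact fun {v} h1 h0 => key v h0 h1
    · exact absurd rfl hij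
  · -- moves
    intro i j hij n hn
    fin_cases i <;> fin_cases j
    · exact absurd rfl hij
    · -- i = 0, j = 1 : A-powers
      show ((A3 a ^ l) ^ n • {v : V3 | |v.1 0| + |v.1 1| < |v.1 2|} : Set V3) ⊆
        {v : V3 | |v.1 1| + |v.1 2| < |v.1 0|}
      obtain ⟨s, t, hrep, hs, ht⟩ := rep_pow_A a l ha hl n hn
      rw [hrep]
      intro w hw
      rw [Set.mem_smul_set] at hw
      obtain ⟨v, hv, rfl⟩ := hw
      simp only [Set.mem_setOf_eq] at hv ⊢
      have hmv : (Usl s t • v).1 =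
          ![v.1 0 + s * v.1 1 + t * v.1 2, v.1 1 + s * v.1 2, v.1 2] := by
        rw [smul_coe, Usl_mulVec]
      rw [hmv]
      simp only [Matrix.cons_val_zero, Matrix.cons_val_one, Matrix.head_cons,
        Matrix.cons_val_two, Matrix.tail_cons]
      exact core_ineq s t (v.1 0) (v.1 1) (v.1 2) hs ht hv
    · -- i = 1, j = 0 : B-powers
      show ((B3 b ^ l) ^ n • {v : V3 | |v.1 1| + |v.1 2| < |v.1 0|} : Set V3) ⊆
        {v : V3 | |v.1 0| + |v.1 1| < |v.1 2|}
      obtain ⟨s, t, hrep, hs, ht⟩ := rep_pow_B b l hb hl n hn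
      rw [hrep]
      intro w hw
      rw [Set.mem_smul_set] at hw
      obtain ⟨v, hv, rfl⟩ := hw
      simp only [Set.mem_setOf_eq] at hv ⊢
      have hmv : (Lsl s t • v).1 =
          ![v.1 0, s * v.1 0 + v.1 1, t * v.1 0 + s * v.1 1 + v.1 2] := by
        rw [smul_coe, Lsl_mulVec]
      rw [hmv]
      simp only [Matrix.cons_val_zero, Matrix.cons_val_one, Matrix.head_cons,
        Matrix.cons_val_two, Matrix.tail_cons]
      have hkey := core_ineq s t (v.1 2) (v.1 1) (v.1 0) hs ht (by linarith)
      have e1 : v.1 1 + s * v.1 0 = s * v.1 0 + v.1 1 := by ring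
      have e2 : v.1 2 + s * v.1 1 + t * v.1 0 = t * v.1 0 + s * v.1 1 + v.1 2 := by ring
      rw [e1, e2] at hkey
      linarith
    · exact absurd rfl hij
end

section
/- Let a, b be natural numbers with a ≥ 2 and b ≥ 2, and let A, B ∈ SL₄(ℤ) be the 4×4 matrices with A having 1's on the diagonal, a in each entry (i, i+1) of the superdiagonal, and 0 elsewhere, and B having 1's on the diagonal, b in each entry (i+1, i) of the subdiagonal, and 0 elsewhere. Then for every integer l ≥ 6, the matrices A^l and B^l generate a free subgroup of rank 2 of SL₄(ℤ); that is, the group homomorphism from the free group on two generators to SL₄(ℤ) sending the two generators to A^l and B^l respectively is injective. -/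
/-- The `n×n` matrix with `1`'s on the diagonal, `a` in each superdiagonal entry `(i, i+1)`,
and `0` elsewhere. -/
def upperA (R : Type*) [CommRing R] (n : ℕ) (a : R) : Matrix (Fin n) (Fin n) R :=
  Matrix.of fun i j => if (i : ℕ) = (j : ℕ) then 1 else if (j : ℕ) = (i : ℕ) + 1 then a else 0

/-- The `n×n` matrix with `1`'s on the diagonal, `b` in each subdiagonal entry `(i+1, i)`,
and `0` elsewhere. -/
def lowerB (R : Type*) [CommRing R] (n : ℕ) (b : R) : Matrix (Fin n) (Fin n) R :=
  Matrix.of fun i j => if (i : ℕ) = (j : ℕ) then 1 else if (i : ℕ) = (j : ℕ) + 1 then b else 0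

theorem upperA_det (R : Type*) [CommRing R] (n : ℕ) (a : R) : (upperA R n a).det = 1 := by
  rw [Matrix.det_of_upperTriangular]
  · simp [upperA]
  · intro i j hij
    have h : (j : ℕ) < (i : ℕ) := hij
    simp only [upperA, Matrix.of_apply]
    split_ifs with h1 h2
    · exfalso; omega
    · exfalso; omega
    · rfl

theorem lowerB_det (R : Type*) [CommRing R] (n : ℕ) (b : R) : (lowerB R n b).det = 1 := by
  rw [Matrix.det_of_lowerTriangular]
  · simp [lowerB]
  · intro i j hij
    have h : (i : ℕ) < (j : ℕ) := hij
    simp only [lowerB, Matrix.of_apply]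
    split_ifs with h1 h2
    · exfalso; omega
    · exfalso; omega
    · rfl

/-- The matrix `upperA` as an element of `SL_n(ℤ)`. -/
def Agen (n : ℕ) (a : ℤ) : Matrix.SpecialLinearGroup (Fin n) ℤ :=
  ⟨upperA ℤ n a, upperA_det ℤ n a⟩

/-- The matrix `lowerB` as an element of `SL_n(ℤ)`. -/
def Bgen (n : ℕ) (b : ℤ) : Matrix.SpecialLinearGroup (Fin n) ℤ :=
  ⟨lowerB ℤ n b, lowerB_det ℤ n b⟩

/-- Entrywise reduction modulo `p`, as a group homomorphism `SL_n(ℤ) →* SL_n(ZMod p)`. -/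
def modpn (n p : ℕ) :
    Matrix.SpecialLinearGroup (Fin n) ℤ →* Matrix.SpecialLinearGroup (Fin n) (ZMod p) :=
  Matrix.SpecialLinearGroup.map (Int.castRingHom (ZMod p))

/-! ### Auxiliary development: explicit formula for integer powers of the generators -/

def u2 (m : ℤ) : ℤ := m * (m - 1) / 2
def u3 (m : ℤ) : ℤ := m * (m - 1) * (m - 2) / 6

lemma two_dvd_consec (m : ℤ) : 2 ∣ m * (m - 1) := by
  rcases Int.even_or_odd m with ⟨k, hk⟩ | ⟨k, hk⟩
  · exact ⟨k * (m - 1), by rw [hk]; ring⟩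
  · exact ⟨m * k, by rw [hk]; ring⟩

lemma six_dvd_consec (m : ℤ) : 6 ∣ m * (m - 1) * (m - 2) := by
  have h2 : 2 ∣ m * (m - 1) * (m - 2) := (two_dvd_consec m).mul_right _
  have h3 : 3 ∣ m * (m - 1) * (m - 2) := by
    have : m % 3 = 0 ∨ m % 3 = 1 ∨ m % 3 = 2 := by omega
    rcases this with h | h | h
    · exact Dvd.dvd.mul_right (Dvd.dvd.mul_right (by omega : (3:ℤ) ∣ m) _) _
    · exact Dvd.dvd.mul_right (Dvd.dvd.mul_left (by omega : (3:ℤ) ∣ m - 1) _) _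
    · exact Dvd.dvd.mul_left (by omega : (3:ℤ) ∣ m - 2) _
  omega

lemma two_mul_u2 (m : ℤ) : 2 * u2 m = m * (m - 1) := Int.mul_ediv_cancel' (two_dvd_consec m)
lemma six_mul_u3 (m : ℤ) : 6 * u3 m = m * (m - 1) * (m - 2) :=
  Int.mul_ediv_cancel' (six_dvd_consec m)

lemma u2_succ (m : ℤ) : u2 (m + 1) = u2 m + m := by
  have h : 2 * u2 (m + 1) = 2 * (u2 m + m) := by
    linear_combination two_mul_u2 (m + 1) - two_mul_u2 m
  omega

lemma u2_pred (m : ℤ) : u2 (m - 1) = u2 m - (m - 1) := by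
  have h : 2 * u2 (m - 1) = 2 * (u2 m - (m - 1)) := by
    linear_combination two_mul_u2 (m - 1) - two_mul_u2 m
  omega

lemma u3_succ (m : ℤ) : u3 (m + 1) = u3 m + u2 m := by
  have h : 6 * u3 (m + 1) = 6 * (u3 m + u2 m) := by
    linear_combination six_mul_u3 (m + 1) - six_mul_u3 m - 3 * two_mul_u2 m
  omega

lemma u3_pred (m : ℤ) : u3 (m - 1) = u3 m - u2 m + (m - 1) := by
  have h : 6 * u3 (m - 1) = 6 * (u3 m - u2 m + (m - 1)) := by
    linear_combination six_mul_u3 (m - 1) - six_mul_u3 m + 3 * two_mul_u2 m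
  omega

lemma u2_zero : u2 0 = 0 := by decide
lemma u3_zero : u3 0 = 0 := by decide

/-- The explicit matrix equal to `(Agen 4 a)^m`. -/
def FA (a m : ℤ) : Matrix (Fin 4) (Fin 4) ℤ :=
  !![1, m*a, u2 m*a^2, u3 m*a^3;
     0, 1,   m*a,      u2 m*a^2;
     0, 0,   1,        m*a;
     0, 0,   0,        1]

/-- The explicit matrix equal to `(Bgen 4 b)^m`. -/
def FB (b m : ℤ) : Matrix (Fin 4) (Fin 4) ℤ :=
  !![1,         0,         0,   0;
     m*b,       1,         0,   0;
     u2 m*b^2,  m*b,       1,   0;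
     u3 m*b^3,  u2 m*b^2,  m*b, 1]

lemma Agen_coe (a : ℤ) :
    ((Agen 4 a : Matrix.SpecialLinearGroup (Fin 4) ℤ) : Matrix (Fin 4) (Fin 4) ℤ)
      = !![1, a, 0, 0; 0, 1, a, 0; 0, 0, 1, a; 0, 0, 0, 1] := by
  ext i j
  fin_cases i <;> fin_cases j <;> norm_num [Agen, upperA]

lemma Bgen_coe (b : ℤ) :
    ((Bgen 4 b : Matrix.SpecialLinearGroup (Fin 4) ℤ) : Matrix (Fin 4) (Fin 4) ℤ)
      = !![1, 0, 0, 0; b, 1, 0, 0; 0, b, 1, 0; 0, 0, b, 1] := by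
  ext i j
  fin_cases i <;> fin_cases j <;> norm_num [Bgen, lowerB]

lemma FA_zero (a : ℤ) : FA a 0 = 1 := by
  ext i j
  fin_cases i <;> fin_cases j <;>
    simp [FA, u2_zero, u3_zero, Matrix.one_apply, Matrix.vecHead, Matrix.vecTail]

lemma FB_zero (b : ℤ) : FB b 0 = 1 := by
  ext i j
  fin_cases i <;> fin_cases j <;>
    simp [FB, u2_zero, u3_zero, Matrix.one_apply, Matrix.vecHead, Matrix.vecTail]

lemma FA_mul_A (a m : ℤ) :
    FA a m * !![1, a, 0, 0; 0, 1, a, 0; 0, 0, 1, a; 0, 0, 0, 1] = FA a (m + 1) := by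
  ext i j
  fin_cases i <;> fin_cases j <;>
    simp [FA, Matrix.mul_apply, Fin.sum_univ_four, Matrix.vecHead, Matrix.vecTail,
      u2_succ, u3_succ] <;> ring

lemma FA_mul_Ainv (a m : ℤ) :
    FA a m * !![1, -a, a^2, -a^3; 0, 1, -a, a^2; 0, 0, 1, -a; 0, 0, 0, 1] = FA a (m - 1) := by
  ext i j
  fin_cases i <;> fin_cases j <;>
    simp [FA, Matrix.mul_apply, Fin.sum_univ_four, Matrix.vecHead, Matrix.vecTail,
      u2_pred, u3_pred] <;> ring

lemma FB_mul_B (b m : ℤ) :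
    FB b m * !![1, 0, 0, 0; b, 1, 0, 0; 0, b, 1, 0; 0, 0, b, 1] = FB b (m + 1) := by
  ext i j
  fin_cases i <;> fin_cases j <;>
    simp [FB, Matrix.mul_apply, Fin.sum_univ_four, Matrix.vecHead, Matrix.vecTail,
      u2_succ, u3_succ] <;> ring

lemma FB_mul_Binv (b m : ℤ) :
    FB b m * !![1, 0, 0, 0; -b, 1, 0, 0; b^2, -b, 1, 0; -b^3, b^2, -b, 1] = FB b (m - 1) := by
  ext i j
  fin_cases i <;> fin_cases j <;>
    simp [FB, Matrix.mul_apply, Fin.sum_univ_four, Matrix.vecHead, Matrix.vecTail,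
      u2_pred, u3_pred] <;> ring

/-- The inverse of `Agen 4 a` as an element of `SL₄(ℤ)`. -/
def AgenInv (a : ℤ) : Matrix.SpecialLinearGroup (Fin 4) ℤ :=
  ⟨!![1, -a, a^2, -a^3; 0, 1, -a, a^2; 0, 0, 1, -a; 0, 0, 0, 1], by
    rw [Matrix.det_of_upperTriangular]
    · simp [Fin.prod_univ_four]
    · intro i j hij
      fin_cases i <;> fin_cases j <;> first | rfl | exact absurd hij (by decide)⟩

def BgenInv (b : ℤ) : Matrix.SpecialLinearGroup (Fin 4) ℤ :=
  ⟨!![1, 0, 0, 0; -b, 1, 0, 0; b^2, -b, 1, 0; -b^3, b^2, -b, 1], by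
    rw [Matrix.det_of_lowerTriangular]
    · simp [Fin.prod_univ_four]
    · intro i j hij
      fin_cases i <;> fin_cases j <;> first | rfl | exact absurd hij (by decide)⟩

lemma Agen_inv_coe (a : ℤ) :
    (((Agen 4 a)⁻¹ : Matrix.SpecialLinearGroup (Fin 4) ℤ) : Matrix (Fin 4) (Fin 4) ℤ)
      = !![1, -a, a^2, -a^3; 0, 1, -a, a^2; 0, 0, 1, -a; 0, 0, 0, 1] := by
  have h : Agen 4 a * AgenInv a = 1 := by
    apply Subtype.ext
    rw [Matrix.SpecialLinearGroup.coe_mul, Agen_coe]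
    show _ = (1 : Matrix (Fin 4) (Fin 4) ℤ)
    ext i j
    fin_cases i <;> fin_cases j <;>
      simp [AgenInv, Matrix.mul_apply, Fin.sum_univ_four, Matrix.vecHead, Matrix.vecTail,
        Matrix.one_apply] <;> ring
  rw [inv_eq_of_mul_eq_one_right h]
  rfl

lemma Bgen_inv_coe (b : ℤ) :
    (((Bgen 4 b)⁻¹ : Matrix.SpecialLinearGroup (Fin 4) ℤ) : Matrix (Fin 4) (Fin 4) ℤ)
      = !![1, 0, 0, 0; -b, 1, 0, 0; b^2, -b, 1, 0; -b^3, b^2, -b, 1] := by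
  have h : Bgen 4 b * BgenInv b = 1 := by
    apply Subtype.ext
    rw [Matrix.SpecialLinearGroup.coe_mul, Bgen_coe]
    show _ = (1 : Matrix (Fin 4) (Fin 4) ℤ)
    ext i j
    fin_cases i <;> fin_cases j <;>
      simp [BgenInv, Matrix.mul_apply, Fin.sum_univ_four, Matrix.vecHead, Matrix.vecTail,
        Matrix.one_apply] <;> ring
  rw [inv_eq_of_mul_eq_one_right h]
  rfl

lemma Agen_zpow (a : ℤ) (m : ℤ) :
    ((Agen 4 a ^ m : Matrix.SpecialLinearGroup (Fin 4) ℤ) : Matrix (Fin 4) (Fin 4) ℤ)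
      = FA a m := by
  induction m using Int.induction_on with
  | zero => rw [zpow_zero, Matrix.SpecialLinearGroup.coe_one, FA_zero]
  | succ n ih =>
      rw [zpow_add_one, Matrix.SpecialLinearGroup.coe_mul, ih, Agen_coe, FA_mul_A]
  | pred n ih =>
      rw [show (-(n:ℤ) - 1) = (-(n:ℤ)) - 1 from rfl, zpow_sub_one,
        Matrix.SpecialLinearGroup.coe_mul, ih, Agen_inv_coe, FA_mul_Ainv]

lemma Bgen_zpow (b : ℤ) (m : ℤ) :
    ((Bgen 4 b ^ m : Matrix.SpecialLinearGroup (Fin 4) ℤ) : Matrix (Fin 4) (Fin 4) ℤ)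
      = FB b m := by
  induction m using Int.induction_on with
  | zero => rw [zpow_zero, Matrix.SpecialLinearGroup.coe_one, FB_zero]
  | succ n ih =>
      rw [zpow_add_one, Matrix.SpecialLinearGroup.coe_mul, ih, Bgen_coe, FB_mul_B]
  | pred n ih =>
      rw [show (-(n:ℤ) - 1) = (-(n:ℤ)) - 1 from rfl, zpow_sub_one,
        Matrix.SpecialLinearGroup.coe_mul, ih, Bgen_inv_coe, FB_mul_Binv]

lemma key (a m x1 x2 x3 x4 : ℤ) (ha : 2 ≤ a) (hm : 6 ≤ |m|)
    (h : |x1| + |x2| + |x3| < |x4|) :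
    |x2 + m * a * x3 + u2 m * a ^ 2 * x4| + |x3 + m * a * x4| + |x4|
      < |x1 + m * a * x2 + u2 m * a ^ 2 * x3 + u3 m * a ^ 3 * x4| := by
  have ha0 : (0:ℤ) < a := by linarith
  have hq : 5 ≤ |m - 1| := by
    have := abs_sub_abs_le_abs_sub m 1
    simp only [abs_one] at this; linarith
  have hr : 4 ≤ |m - 2| := by
    have := abs_sub_abs_le_abs_sub m 2
    norm_num at this; linarith
  have hpn : (0:ℤ) ≤ |m| := abs_nonneg m
  have hqn : (0:ℤ) ≤ |m - 1| := abs_nonneg _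
  have hrn : (0:ℤ) ≤ |m - 2| := abs_nonneg _
  have e2 : 2 * |u2 m| = |m| * |m - 1| := by
    have h0 : |2 * u2 m| = |m * (m - 1)| := by rw [two_mul_u2]
    rw [abs_mul, abs_mul] at h0
    norm_num at h0
    exact h0
  have e3 : 6 * |u3 m| = |m| * |m - 1| * |m - 2| := by
    have h0 : |6 * u3 m| = |m * (m - 1) * (m - 2)| := by rw [six_mul_u3]
    rw [abs_mul, abs_mul, abs_mul] at h0
    norm_num at h0
    exact h0
  have hma : ∀ x : ℤ, |m * a * x| = |m| * a * |x| := by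
    intro x; rw [abs_mul, abs_mul, abs_of_pos ha0]
  have hu2 : ∀ x : ℤ, |u2 m * a ^ 2 * x| = |u2 m| * a ^ 2 * |x| := by
    intro x; rw [abs_mul, abs_mul, abs_pow, abs_of_pos ha0]
  have hu3 : ∀ x : ℤ, |u3 m * a ^ 3 * x| = |u3 m| * a ^ 3 * |x| := by
    intro x; rw [abs_mul, abs_mul, abs_pow, abs_of_pos ha0]
  have hD1n : (0:ℤ) ≤ |m| * a := mul_nonneg hpn ha0.le
  have hD2n : (0:ℤ) ≤ |u2 m| * a ^ 2 := mul_nonneg (abs_nonneg _) (by positivity)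
  -- the crucial size estimate
  have Dineq : 2 + 2 * (|m| * a) + 2 * (|u2 m| * a ^ 2) ≤ |u3 m| * a ^ 3 := by
    have e2' : 2 * (|u2 m| * a ^ 2) = |m| * |m - 1| * a ^ 2 := by
      linear_combination a ^ 2 * e2
    have e3' : 6 * (|u3 m| * a ^ 3) = |m| * |m - 1| * |m - 2| * a ^ 3 := by
      linear_combination a ^ 3 * e3
    have h1 : (8:ℤ) ≤ |m - 2| * a := by
      have := mul_le_mul hr ha (by norm_num) hrn
      linarith
    have hqa : (10:ℤ) ≤ |m - 1| * a := by
      have := mul_le_mul hq ha (by norm_num) hqn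
      linarith
    have h2 : 10 * (|m| * a) ≤ |m| * |m - 1| * a ^ 2 := by
      nlinarith [mul_le_mul_of_nonneg_left hqa hD1n]
    have h3 : (12:ℤ) ≤ |m| * a := by
      have := mul_le_mul hm ha (by norm_num) hpn
      linarith
    have h4 : |m| * |m - 1| * a ^ 2 * 8 ≤ |m| * |m - 1| * a ^ 2 * (|m - 2| * a) := by
      apply mul_le_mul_of_nonneg_left h1
      positivity
    nlinarith [e2', e3', h2, h3, h4]
  -- triangle inequality bounds
  have t2 : |x2 + m * a * x3 + u2 m * a ^ 2 * x4|
      ≤ |x2| + |m| * a * |x3| + |u2 m| * a ^ 2 * |x4| := by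
    calc |x2 + m * a * x3 + u2 m * a ^ 2 * x4|
        ≤ |x2 + m * a * x3| + |u2 m * a ^ 2 * x4| := abs_add_le _ _
    _ ≤ |x2| + |m * a * x3| + |u2 m * a ^ 2 * x4| := by linarith [abs_add_le x2 (m * a * x3)]
    _ = |x2| + |m| * a * |x3| + |u2 m| * a ^ 2 * |x4| := by rw [hma, hu2]
  have t3 : |x3 + m * a * x4| ≤ |x3| + |m| * a * |x4| := by
    calc |x3 + m * a * x4| ≤ |x3| + |m * a * x4| := abs_add_le _ _
    _ = |x3| + |m| * a * |x4| := by rw [hma]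
  have t1 : |u3 m| * a ^ 3 * |x4| - (|x1| + |m| * a * |x2| + |u2 m| * a ^ 2 * |x3|)
      ≤ |x1 + m * a * x2 + u2 m * a ^ 2 * x3 + u3 m * a ^ 3 * x4| := by
    have h0 : |u3 m * a ^ 3 * x4| ≤ |x1 + m * a * x2 + u2 m * a ^ 2 * x3 + u3 m * a ^ 3 * x4|
        + |x1 + m * a * x2 + u2 m * a ^ 2 * x3| := by
      have h1 := abs_sub (x1 + m * a * x2 + u2 m * a ^ 2 * x3 + u3 m * a ^ 3 * x4)
        (x1 + m * a * x2 + u2 m * a ^ 2 * x3)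
      rw [show (x1 + m * a * x2 + u2 m * a ^ 2 * x3 + u3 m * a ^ 3 * x4)
        - (x1 + m * a * x2 + u2 m * a ^ 2 * x3) = u3 m * a ^ 3 * x4 from by ring] at h1
      exact h1
    have hpart : |x1 + m * a * x2 + u2 m * a ^ 2 * x3|
        ≤ |x1| + |m| * a * |x2| + |u2 m| * a ^ 2 * |x3| := by
      calc |x1 + m * a * x2 + u2 m * a ^ 2 * x3|
          ≤ |x1 + m * a * x2| + |u2 m * a ^ 2 * x3| := abs_add_le _ _
      _ ≤ |x1| + |m * a * x2| + |u2 m * a ^ 2 * x3| := by linarith [abs_add_le x1 (m * a * x2)]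
      _ = |x1| + |m| * a * |x2| + |u2 m| * a ^ 2 * |x3| := by rw [hma, hu2]
    have := hu3 x4
    linarith
  -- final combination
  have m1 : (2 + 2 * (|m| * a) + 2 * (|u2 m| * a ^ 2)) * |x4| ≤ (|u3 m| * a ^ 3) * |x4| :=
    mul_le_mul_of_nonneg_right Dineq (abs_nonneg x4)
  have m2 : 0 ≤ (1 + |m| * a + |u2 m| * a ^ 2) * (|x4| - (|x1| + |x2| + |x3| + 1)) := by
    apply mul_nonneg
    · linarith
    · linarith
  nlinarith [t1, t2, t3, m1, m2, mul_nonneg hD1n (abs_nonneg x1),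
    mul_nonneg hD2n (abs_nonneg x1), mul_nonneg hD2n (abs_nonneg x2),
    abs_nonneg x1, abs_nonneg x2, abs_nonneg x3, abs_nonneg x4]

/-! ### The action on `ℤ⁴` and the ping-pong sets -/

instance sl4Action : MulAction (Matrix.SpecialLinearGroup (Fin 4) ℤ) (Fin 4 → ℤ) where
  smul g v := Matrix.mulVec (g : Matrix (Fin 4) (Fin 4) ℤ) v
  one_smul v := by
    show Matrix.mulVec _ _ = _
    rw [Matrix.SpecialLinearGroup.coe_one, Matrix.one_mulVec]
  mul_smul g h v := by
    show Matrix.mulVec _ _ = Matrix.mulVec _ (Matrix.mulVec _ _)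
    rw [Matrix.SpecialLinearGroup.coe_mul, ← Matrix.mulVec_mulVec]

lemma sl4_smul_def (g : Matrix.SpecialLinearGroup (Fin 4) ℤ) (v : Fin 4 → ℤ) :
    g • v = Matrix.mulVec (g : Matrix (Fin 4) (Fin 4) ℤ) v := rfl

/-- Ping-pong set for `A`: first coordinate dominates. -/
def XA : Set (Fin 4 → ℤ) := {v | |v 1| + |v 2| + |v 3| < |v 0|}

/-- Ping-pong set for `B`: last coordinate dominates. -/
def XB : Set (Fin 4 → ℤ) := {v | |v 0| + |v 1| + |v 2| < |v 3|}

lemma FA_mulVec (a m : ℤ) (v : Fin 4 → ℤ) :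
    Matrix.mulVec (FA a m) v = ![v 0 + m * a * v 1 + u2 m * a ^ 2 * v 2 + u3 m * a ^ 3 * v 3,
      v 1 + m * a * v 2 + u2 m * a ^ 2 * v 3, v 2 + m * a * v 3, v 3] := by
  ext i
  fin_cases i <;>
    simp [FA, Matrix.mulVec, dotProduct, Fin.sum_univ_four, Matrix.vecHead,
      Matrix.vecTail] <;> ring

lemma FB_mulVec (b m : ℤ) (v : Fin 4 → ℤ) :
    Matrix.mulVec (FB b m) v = ![v 0, v 1 + m * b * v 0,
      v 2 + m * b * v 1 + u2 m * b ^ 2 * v 0,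
      v 3 + m * b * v 2 + u2 m * b ^ 2 * v 1 + u3 m * b ^ 3 * v 0] := by
  ext i
  fin_cases i <;>
    simp [FB, Matrix.mulVec, dotProduct, Fin.sum_univ_four, Matrix.vecHead,
      Matrix.vecTail] <;> ring

lemma A_maps (a m : ℤ) (ha : 2 ≤ a) (hm : 6 ≤ |m|) {v : Fin 4 → ℤ} (hv : v ∈ XB) :
    (Agen 4 a ^ m) • v ∈ XA := by
  rw [sl4_smul_def, Agen_zpow, FA_mulVec]
  have := key a m (v 0) (v 1) (v 2) (v 3) ha hm hv
  simpa [XA] using this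

lemma B_maps (b m : ℤ) (hb : 2 ≤ b) (hm : 6 ≤ |m|) {v : Fin 4 → ℤ} (hv : v ∈ XA) :
    (Bgen 4 b ^ m) • v ∈ XB := by
  rw [sl4_smul_def, Bgen_zpow, FB_mulVec]
  have hv' : |v 3| + |v 2| + |v 1| < |v 0| := by
    have : |v 1| + |v 2| + |v 3| < |v 0| := hv
    linarith
  have hk := key b m (v 3) (v 2) (v 1) (v 0) hb hm hv'
  show |v 0| + |v 1 + m * b * v 0| + |v 2 + m * b * v 1 + u2 m * b ^ 2 * v 0|
      < |v 3 + m * b * v 2 + u2 m * b ^ 2 * v 1 + u3 m * b ^ 3 * v 0|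
  linarith [hk]

/-! ### Assembly via the ping-pong lemma -/

open Monoid.CoprodI Pointwise

/-- for natural numbers `a, b ≥ 2`, with `A, B ∈ SL₄(ℤ)` the matrices with
`1`'s on the diagonal and `a` on the superdiagonal (resp. `b` on the subdiagonal) and `0`
elsewhere, for every `l ≥ 6` the matrices `A^l` and `B^l` generate a free subgroup of rank 2
of `SL₄(ℤ)`. -/
theorem sl4_free_powers (a b : ℕ) (ha : 2 ≤ a) (hb : 2 ≤ b) (l : ℕ) (hl : 6 ≤ l) :
    Function.Injective ⇑(FreeGroup.lift ![(Agen 4 (a : ℤ)) ^ l, (Bgen 4 (b : ℤ)) ^ l]) := by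
  classical
  set g : Fin 2 → Matrix.SpecialLinearGroup (Fin 4) ℤ :=
    ![(Agen 4 (a : ℤ)) ^ l, (Bgen 4 (b : ℤ)) ^ l] with hg
  -- express the free group lift via the free product lift
  have hfactor : FreeGroup.lift g =
      (Monoid.CoprodI.lift fun i : Fin 2 => FreeGroup.lift fun _ : Unit => g i).comp
        (@freeGroupEquivCoprodI (Fin 2)).toMonoidHom := by
    ext i
    simp
  rw [hfactor, MonoidHom.coe_comp]
  refine Function.Injective.comp ?_ (MulEquiv.injective freeGroupEquivCoprodI)
  -- invoke the ping-pong lemma for free products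
  let H : Fin 2 → Type := fun _ => FreeGroup Unit
  let f : ∀ i : Fin 2, H i →* Matrix.SpecialLinearGroup (Fin 4) ℤ :=
    fun i => FreeGroup.lift fun _ => g i
  let X : Fin 2 → Set (Fin 4 → ℤ) := ![XA, XB]
  -- the key power condition
  have hpow : ∀ (i j : Fin 2), i ≠ j → ∀ n : ℤ, n ≠ 0 → (g i) ^ n • X j ⊆ X i := by
    intro i j hij n hn
    have habs : (6 : ℤ) ≤ |(l : ℤ) * n| := by
      rw [abs_mul]
      have h1 : (6 : ℤ) ≤ (l : ℤ) := by exact_mod_cast hl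
      have h2 : (1 : ℤ) ≤ |n| := by
        rcases lt_or_gt_of_ne hn with h | h <;> rw [abs] <;> omega
      calc (6:ℤ) = 6 * 1 := by ring
      _ ≤ |(l:ℤ)| * |n| := by
        apply mul_le_mul _ h2 (by norm_num) (abs_nonneg _)
        rw [abs_of_nonneg (by positivity)]
        exact h1
    fin_cases i <;> fin_cases j <;> simp_all <;> rintro x ⟨v, hv, rfl⟩
    · -- i = 0, j = 1 : A-powers map XB into XA
      have h0 : g 0 ^ n = Agen 4 (a : ℤ) ^ ((l : ℤ) * n) := by
        show ((Agen 4 (a : ℤ)) ^ l) ^ n = _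
        rw [← zpow_natCast, ← zpow_mul]
      show (g 0) ^ n • v ∈ XA
      rw [h0]
      exact A_maps (a : ℤ) ((l : ℤ) * n) (by exact_mod_cast ha) (by rw [abs_mul, Nat.abs_cast]; exact habs) hv
    · -- i = 1, j = 0 : B-powers map XA into XB
      have h0 : g 1 ^ n = Bgen 4 (b : ℤ) ^ ((l : ℤ) * n) := by
        show ((Bgen 4 (b : ℤ)) ^ l) ^ n = _
        rw [← zpow_natCast, ← zpow_mul]
      show (g 1) ^ n • v ∈ XB
      rw [h0]
      exact B_maps (b : ℤ) ((l : ℤ) * n) (by exact_mod_cast hb) (by rw [abs_mul, Nat.abs_cast]; exact habs) hv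
  apply Monoid.CoprodI.lift_injective_of_ping_pong f ?_ X
  · -- nonempty
    intro i
    fin_cases i
    · exact ⟨![1, 0, 0, 0], by simp [X, XA]⟩
    · exact ⟨![0, 0, 0, 1], by simp [X, XB]⟩
  · -- disjoint
    intro i j hij
    have hd : Disjoint XA XB := by
      rw [Set.disjoint_left]
      intro v hvA hvB
      have h1 : |v 1| + |v 2| + |v 3| < |v 0| := hvA
      have h2 : |v 0| + |v 1| + |v 2| < |v 3| := hvB
      have := abs_nonneg (v 1); have := abs_nonneg (v 2)
      linarith
    fin_cases i <;> fin_cases j <;> simp_all [X] <;> [exact hd; exact hd.symm]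
  · -- the ping-pong condition
    intro i j hij
    refine FreeGroup.freeGroupUnitEquivInt.forall_congr_left.mpr ?_
    intro n hne1
    change FreeGroup.lift (fun _ => g i) (FreeGroup.of () ^ n) • X j ⊆ X i
    simp only [map_zpow, FreeGroup.lift_apply_of]
    have hnne0 : n ≠ 0 := by
      rintro rfl
      apply hne1
      simp [H, FreeGroup.freeGroupUnitEquivInt]
    exact hpow i j hij n hnne0
  · -- cardinality condition
    right
    exact ⟨0, by
      simp only [H]
      exact le_trans (le_of_lt (by exact_mod_cast Cardinal.nat_lt_aleph0 3))
        (Cardinal.aleph0_le_mk _)⟩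
end
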